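/- If -1 and 2 are squares in a field F of characteristic zero with quadratic extension K = F(√d), then for every n there exists X ∈ GL(n,K) such that X*X = S, where S is the anti-diagonal permutation matrix with Sᵢⱼ = δ_{i,n+1-j}. -/

import Mathlib

open Matrix

/-- if `-1` and `2` are squares in `F`, then for every `n` there is
`X ∈ GL(n,K)` with `X*X = S`, the anti-diagonal permutation matrix. -/
theorem stmt2 (F K : Type*) [Field F] [Field K] [CharZero F] [Algebra F K]
    (σ : K ≃ₐ[F] K) (hσinv : ∀ x, σ (σ x) = x)
    (hfix : ∀ x : K, σ x = x ↔ ∃ y : F, algebraMap F K y = x)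
    (d : F) (hd0 : d ≠ 0) (hd : ¬ IsSquare d)
    (s : K) (hs : s * s = algebraMap F K d) (hσs : σ s = -s)
    (hgen : ∀ x : K, ∃ a b : F, x = algebraMap F K a + algebraMap F K b * s)
    (h1 : IsSquare (-1 : F)) (h2 : IsSquare (2 : F)) (n : ℕ) :
    ∃ X : Matrix (Fin n) (Fin n) K, IsUnit X.det ∧
      (X.map σ)ᵀ * X =
        Matrix.of (fun i j : Fin n => if (i : ℕ) + (j : ℕ) + 1 = n then (1 : K) else 0) := by
  obtain ⟨r, hr⟩ := h1
  obtain ⟨t, ht⟩ := h2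
  set c : F →+* K := (algebraMap F K) with hc
  set R : K := c r with hRdef
  set T : K := c t with hTdef
  have hT2 : T * T = 2 := by rw [hTdef, ← _root_.map_mul c t t, ← ht]; exact map_ofNat c 2
  have hR2 : R * R = -1 := by rw [hRdef, ← _root_.map_mul c r r, ← hr, map_neg, _root_.map_one c]
  have h2K : (2 : K) ≠ 0 := by
    intro h
    have h2 : c (2 : F) = (2 : K) := map_ofNat c 2
    have : (2 : F) = 0 := c.injective (by rw [h2, h, map_zero])
    exact two_ne_zero this
  have hT : T ≠ 0 := by
    intro h
    rw [h, mul_zero] at hT2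
    exact h2K hT2.symm
  set X : Matrix (Fin n) (Fin n) K := Matrix.of (fun k i : Fin n =>
    if 2 * (k : ℕ) + 1 = n then (if (i : ℕ) = k then 1 else 0)
    else if 2 * (k : ℕ) + 1 < n then
      (if (i : ℕ) = k ∨ (i : ℕ) + (k : ℕ) + 1 = n then T⁻¹ else 0)
    else if (i : ℕ) = k then -(R * T⁻¹)
    else if (i : ℕ) + (k : ℕ) + 1 = n then R * T⁻¹ else 0) with hX
  have hσfix : ∀ k i : Fin n, σ (X k i) = X k i := by
    intro k i
    have hσT : σ T = T := σ.commutes t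
    have hσR : σ R = R := σ.commutes r
    simp only [hX, Matrix.of_apply]
    split_ifs <;> simp [map_inv₀, hσT, hσR]
  have hsupp : ∀ k i : Fin n, (i : ℕ) ≠ k → (i : ℕ) + (k : ℕ) + 1 ≠ n → X k i = 0 := by
    intro k i h1' h2'
    simp only [hX, Matrix.of_apply]
    split_ifs <;> first | rfl | omega
  have hmid : ∀ k : Fin n, 2 * (k : ℕ) + 1 = n → X k k = 1 := by
    intro k h; simp [hX, h]
  have hsmall1 : ∀ k i : Fin n, 2 * (k : ℕ) + 1 < n →
      ((i : ℕ) = k ∨ (i : ℕ) + (k : ℕ) + 1 = n) → X k i = T⁻¹ := by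
    intro k i h h'
    simp only [hX, Matrix.of_apply]
    rw [if_neg (by omega), if_pos h, if_pos h']
  have hbig1 : ∀ k : Fin n, n < 2 * (k : ℕ) + 1 → X k k = -(R * T⁻¹) := by
    intro k h
    simp only [hX, Matrix.of_apply]
    rw [if_neg (by omega), if_neg (by omega)]
    simp
  have hbig2 : ∀ k i : Fin n, n < 2 * (k : ℕ) + 1 → (i : ℕ) + (k : ℕ) + 1 = n →
      X k i = R * T⁻¹ := by
    intro k i h h'
    simp only [hX, Matrix.of_apply]
    rw [if_neg (by omega), if_neg (by omega), if_neg (by omega), if_pos h']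
  have key1 : T⁻¹ * T⁻¹ - R * T⁻¹ * (R * T⁻¹) = 1 := by
    field_simp; linear_combination -hR2 - hT2
  have key2 : T⁻¹ * T⁻¹ + R * T⁻¹ * (R * T⁻¹) = 0 := by
    field_simp; linear_combination hR2
  have hmain : (X.map σ)ᵀ * X =
      Matrix.of (fun i j : Fin n => if (i : ℕ) + (j : ℕ) + 1 = n then (1 : K) else 0) := by
    ext i j
    rw [Matrix.mul_apply]
    simp only [Matrix.transpose_apply, Matrix.map_apply, hσfix, Matrix.of_apply]
    by_cases hij : (i : ℕ) + (j : ℕ) + 1 = n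
    · rw [if_pos hij]
      rcases lt_trichotomy ((i : ℕ)) ((j : ℕ)) with h | h | h
      · have hi : 2 * (i : ℕ) + 1 < n := by omega
        have hj : n < 2 * (j : ℕ) + 1 := by omega
        have hne : i ≠ j := fun he => by rw [he] at h; exact lt_irrefl _ h
        rw [Finset.sum_eq_add_of_mem i j (Finset.mem_univ _) (Finset.mem_univ _) hne ?_]
        · rw [hsmall1 i i hi (Or.inl rfl), hsmall1 i j hi (Or.inr (by omega)),
            hbig2 j i hj hij, hbig1 j hj]
          linear_combination key1
        · intro e _ ⟨hei, hej⟩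
          have h1' : (i : ℕ) ≠ e := fun hh => hei (Fin.ext hh.symm)
          have h2' : (j : ℕ) ≠ e := fun hh => hej (Fin.ext hh.symm)
          rw [hsupp e i h1' (by omega), zero_mul]
      · have hij2 : i = j := Fin.ext h
        subst hij2
        rw [Finset.sum_eq_single_of_mem i (Finset.mem_univ _) ?_]
        · rw [hmid i (by omega)]; ring
        · intro e _ he
          have h1' : (i : ℕ) ≠ e := fun hh => he (Fin.ext hh.symm)
          rw [hsupp e i h1' (by omega), zero_mul]
      · have hi : n < 2 * (i : ℕ) + 1 := by omega
        have hj : 2 * (j : ℕ) + 1 < n := by omega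
        have hne : j ≠ i := fun he => by rw [he] at h; exact lt_irrefl _ h
        rw [Finset.sum_eq_add_of_mem j i (Finset.mem_univ _) (Finset.mem_univ _) hne ?_]
        · rw [hsmall1 j i hj (Or.inr (by omega)), hsmall1 j j hj (Or.inl rfl),
            hbig1 i hi, hbig2 i j hi (by omega)]
          linear_combination key1
        · intro e _ ⟨hej, hei⟩
          have h1' : (i : ℕ) ≠ e := fun hh => hei (Fin.ext hh.symm)
          have h2' : (j : ℕ) ≠ e := fun hh => hej (Fin.ext hh.symm)
          rw [hsupp e i h1' (by omega), zero_mul]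
    · rw [if_neg hij]
      by_cases hji : (i : ℕ) = (j : ℕ)
      · have hij2 : i = j := Fin.ext hji
        subst hij2
        have hnm : 2 * (i : ℕ) + 1 ≠ n := by omega
        have hq : n - 1 - (i : ℕ) < n := by omega
        set q : Fin n := ⟨n - 1 - (i : ℕ), hq⟩ with hqdef
        have hqv : (q : ℕ) = n - 1 - (i : ℕ) := rfl
        have hiq : (i : ℕ) + (q : ℕ) + 1 = n := by omega
        have hqi : i ≠ q := by
          intro hh
          have := congrArg Fin.val hh
          rw [hqv] at this
          omega
        rw [Finset.sum_eq_add_of_mem i q (Finset.mem_univ _) (Finset.mem_univ _) hqi ?_]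
        · rcases lt_or_gt_of_ne hnm with hi | hi
          · have hqbig : n < 2 * (q : ℕ) + 1 := by omega
            rw [hsmall1 i i hi (Or.inl rfl), hbig2 q i hqbig hiq]
            linear_combination key2
          · have hqsmall : 2 * (q : ℕ) + 1 < n := by omega
            rw [hbig1 i hi, hsmall1 q i hqsmall (Or.inr hiq)]
            linear_combination key2
        · intro e _ ⟨hei, heq⟩
          have h1' : (i : ℕ) ≠ e := fun hh => hei (Fin.ext hh.symm)
          have h2' : (i : ℕ) + (e : ℕ) + 1 ≠ n := by
            intro hh
            exact heq (Fin.ext (by omega))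
          rw [hsupp e i h1' h2', zero_mul]
      · apply Finset.sum_eq_zero
        intro e _
        by_cases h1e : (i : ℕ) = e ∨ (i : ℕ) + (e : ℕ) + 1 = n
        · rw [hsupp e j (by omega) (by omega), mul_zero]
        · push_neg at h1e
          rw [hsupp e i h1e.1 h1e.2, zero_mul]
  -- S * S = 1
  have hSS : (Matrix.of (fun i j : Fin n => if (i : ℕ) + (j : ℕ) + 1 = n then (1 : K) else 0)) *
      (Matrix.of (fun i j : Fin n => if (i : ℕ) + (j : ℕ) + 1 = n then (1 : K) else 0)) = 1 := by
    ext i j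
    rw [Matrix.mul_apply, Matrix.one_apply]
    simp only [Matrix.of_apply]
    have hq : n - 1 - (i : ℕ) < n := by omega
    set q : Fin n := ⟨n - 1 - (i : ℕ), hq⟩ with hqdef
    have hqv : (q : ℕ) = n - 1 - (i : ℕ) := rfl
    have hiq : (i : ℕ) + (q : ℕ) + 1 = n := by omega
    rw [Finset.sum_eq_single_of_mem q (Finset.mem_univ _) ?_]
    · rw [if_pos hiq, one_mul]
      have : ((q : ℕ) + (j : ℕ) + 1 = n) ↔ i = j := by
        rw [Fin.ext_iff]; omega
      by_cases hh : i = j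
      · rw [if_pos (this.mpr hh), if_pos hh]
      · rw [if_neg (fun hc => hh (this.mp hc)), if_neg hh]
    · intro e _ he
      have : (i : ℕ) + (e : ℕ) + 1 ≠ n := by
        intro hh
        exact he (Fin.ext (by omega))
      rw [if_neg this, zero_mul]
  refine ⟨X, ?_, hmain⟩
  have h1' := congrArg Matrix.det hmain
  rw [Matrix.det_mul] at h1'
  have h2' := congrArg Matrix.det hSS
  rw [Matrix.det_mul, Matrix.det_one] at h2'
  refine IsUnit.of_mul_eq_one ((X.map σ)ᵀ.det * ((X.map σ)ᵀ.det * X.det)) ?_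
  calc X.det * ((X.map σ)ᵀ.det * ((X.map σ)ᵀ.det * X.det))
      = ((X.map σ)ᵀ.det * X.det) * ((X.map σ)ᵀ.det * X.det) := by ring
    _ = 1 := by rw [h1', h2']
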